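/- For every even integer n ≥ 4, the minimum cardinality of an odd cover of the cycle C_n on n vertices is (n - 2)/2; that is, b₂(C_n) = (n-2)/2. -/

import Mathlib

open scoped Classical

/-- A list of bicliques `B 0, …, B (k-1)` (each given by a pair of disjoint
vertex subsets) is an *odd cover* of `G` if two distinct vertices are adjacent
in `G` exactly when they lie in opposite parts of an odd number of the bicliques. -/
def IsOddCover {V : Type*} [Fintype V] (G : SimpleGraph V) {k : ℕ}
    (B : Fin k → Finset V × Finset V) : Prop :=
  (∀ i, Disjoint (B i).1 (B i).2) ∧
  ∀ u v : V, u ≠ v →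
    (G.Adj u v ↔ Odd (Finset.univ.filter (fun i : Fin k =>
      (u ∈ (B i).1 ∧ v ∈ (B i).2) ∨ (u ∈ (B i).2 ∧ v ∈ (B i).1))).card)

/-- `b2 G` is the minimum cardinality of an odd cover of `G`. -/
noncomputable def b2 {V : Type*} [Fintype V] (G : SimpleGraph V) : ℕ :=
  sInf {k : ℕ | ∃ B : Fin k → Finset V × Finset V, IsOddCover G B}

/-- `r2 G` is the rank of the adjacency matrix of `G` over `𝔽₂`. -/
noncomputable def r2 {V : Type*} [Fintype V] (G : SimpleGraph V) : ℕ :=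
  (Matrix.of fun u v : V => if G.Adj u v then (1 : ZMod 2) else 0).rank


/-- The cycle graph on `n` vertices `0,1,…,n-1`, with `i` adjacent to `j`
iff `i - j ≡ ±1 (mod n)`. -/
def cycleGraph (n : ℕ) : SimpleGraph (Fin n) :=
  SimpleGraph.fromRel (fun i j => (i.val + 1) % n = j.val)


/- ## Auxiliary lemmas -/



noncomputable def adjMat {V : Type*} [Fintype V] (G : SimpleGraph V) :
    Matrix V V (ZMod 2) :=
  Matrix.of fun u v : V => if G.Adj u v then (1 : ZMod 2) else 0

noncomputable def ind {V : Type*} (S : Finset V) : V → ZMod 2 :=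
  fun u => if u ∈ S then 1 else 0

noncomputable def bmat {V : Type*} (X Y : Finset V) : Matrix V V (ZMod 2) :=
  Matrix.of fun u v => ind X u * ind Y v + ind Y u * ind X v

lemma rank_add_le {V : Type*} [Fintype V] (A B : Matrix V V (ZMod 2)) :
    (A + B).rank ≤ A.rank + B.rank := by
  classical
  unfold Matrix.rank
  rw [Matrix.mulVecLin_add]
  refine le_trans (Submodule.finrank_mono ?_) (Submodule.finrank_add_le_finrank_add_finrank _ _)
  rintro x ⟨y, rfl⟩
  exact Submodule.add_mem_sup ⟨y, rfl⟩ ⟨y, rfl⟩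


lemma bmat_rank {V : Type*} [Fintype V] (X Y : Finset V) : (bmat X Y).rank ≤ 2 := by
  classical
  have h1 : bmat X Y = Matrix.replicateCol Unit (ind X) * Matrix.replicateRow Unit (ind Y)
      + Matrix.replicateCol Unit (ind Y) * Matrix.replicateRow Unit (ind X) := by
    ext u v
    simp [bmat, Matrix.mul_apply, Matrix.replicateCol, Matrix.replicateRow]
  have hr : ∀ f g : V → ZMod 2,
      (Matrix.replicateCol Unit f * Matrix.replicateRow Unit g).rank ≤ 1 := by
    intro f g
    refine le_trans (Matrix.rank_mul_le_left _ _) ?_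
    refine le_trans (Matrix.rank_le_card_width _) ?_
    simp
  calc (bmat X Y).rank ≤ (Matrix.replicateCol Unit (ind X) * Matrix.replicateRow Unit (ind Y)).rank
        + (Matrix.replicateCol Unit (ind Y) * Matrix.replicateRow Unit (ind X)).rank := by
        rw [h1]; exact rank_add_le _ _
    _ ≤ 2 := by have := hr (ind X) (ind Y); have := hr (ind Y) (ind X); omega

lemma decomp {V : Type*} [Fintype V] (G : SimpleGraph V) {k : ℕ}
    (B : Fin k → Finset V × Finset V)
    (hd : ∀ i, Disjoint (B i).1 (B i).2)
    (hc : ∀ u v : V, u ≠ v →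
      (G.Adj u v ↔ Odd (Finset.univ.filter (fun i : Fin k =>
        (u ∈ (B i).1 ∧ v ∈ (B i).2) ∨ (u ∈ (B i).2 ∧ v ∈ (B i).1))).card)) :
    (Matrix.of fun u v : V => if G.Adj u v then (1 : ZMod 2) else 0)
      = ∑ i : Fin k, bmat (B i).1 (B i).2 := by
  ext u v
  simp only [Matrix.of_apply, Matrix.sum_apply, bmat]
  by_cases huv : u = v
  · subst huv
    rw [if_neg (G.irrefl)]
    symm
    calc ∑ i : Fin k, (ind (B i).1 u * ind (B i).2 u + ind (B i).2 u * ind (B i).1 u : ZMod 2)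
        = ∑ _i : Fin k, (0 : ZMod 2) := Finset.sum_congr rfl (fun i _ => by
          rw [mul_comm (ind (B i).2 u)]; exact CharTwo.add_self_eq_zero _)
      _ = 0 := by simp
  · have key : ∀ i : Fin k,
        (ind (B i).1 u * ind (B i).2 v + ind (B i).2 u * ind (B i).1 v : ZMod 2)
        = if ((u ∈ (B i).1 ∧ v ∈ (B i).2) ∨ (u ∈ (B i).2 ∧ v ∈ (B i).1)) then 1 else 0 := by
      intro i
      have hdis : ∀ w : V, w ∈ (B i).1 → w ∈ (B i).2 → False := fun w h1 h2 =>
        (Finset.disjoint_left.mp (hd i)) h1 h2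
      by_cases h1 : u ∈ (B i).1 <;> by_cases h2 : u ∈ (B i).2 <;>
        by_cases h3 : v ∈ (B i).1 <;> by_cases h4 : v ∈ (B i).2 <;>
        first
          | (exact absurd h2 (fun h => hdis u h1 h))
          | (exact absurd h4 (fun h => hdis v h3 h))
          | simp [ind, h1, h2, h3, h4]
    rw [Finset.sum_congr rfl (fun i _ => key i)]
    have hcast : ((Finset.univ.filter (fun i : Fin k =>
        (u ∈ (B i).1 ∧ v ∈ (B i).2) ∨ (u ∈ (B i).2 ∧ v ∈ (B i).1))).card : ZMod 2)
        = ∑ i : Fin k, if ((u ∈ (B i).1 ∧ v ∈ (B i).2) ∨ (u ∈ (B i).2 ∧ v ∈ (B i).1))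
            then (1 : ZMod 2) else 0 := by
      rw [Finset.card_filter]
      push_cast
      rfl
    rw [← hcast]
    by_cases ha : G.Adj u v
    · rw [if_pos ha]
      have := (hc u v huv).mp ha
      exact (ZMod.natCast_eq_one_iff_odd.mpr this).symm
    · rw [if_neg ha]
      have : ¬ Odd (Finset.univ.filter (fun i : Fin k =>
        (u ∈ (B i).1 ∧ v ∈ (B i).2) ∨ (u ∈ (B i).2 ∧ v ∈ (B i).1))).card := by
        intro h; exact ha ((hc u v huv).mpr h)
      have h2 := ZMod.natCast_ne_zero_iff_odd (n := (Finset.univ.filter (fun i : Fin k =>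
        (u ∈ (B i).1 ∧ v ∈ (B i).2) ∨ (u ∈ (B i).2 ∧ v ∈ (B i).1))).card)
      symm
      by_contra hne
      exact this (h2.mp hne)


lemma val_add_one {n : ℕ} (hn : 3 ≤ n) (u : Fin n) :
    haveI : NeZero n := ⟨by omega⟩
    (u + 1).val = (u.val + 1) % n := by
  haveI : NeZero n := ⟨by omega⟩
  rw [Fin.add_def, Fin.val_one', Nat.mod_eq_of_lt (show 1 < n by omega)]

lemma cycle_adj {n : ℕ} [NeZero n] (hn : 3 ≤ n) (u v : Fin n) :
    (cycleGraph n).Adj u v ↔ (v = u + 1 ∨ u = v + 1) := by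
  have hne : ∀ w : Fin n, w + 1 ≠ w := by
    intro w h
    have := congrArg Fin.val h
    rw [val_add_one hn] at this
    have hv := w.isLt
    rcases Nat.lt_or_ge (w.val + 1) n with h' | h'
    · rw [Nat.mod_eq_of_lt h'] at this; omega
    · have : (w.val + 1) % n = 0 := by
        have : w.val + 1 = n := by omega
        simp [this]
      omega
  constructor
  · rintro ⟨hne', h | h⟩
    · left; apply Fin.ext; rw [val_add_one hn]; exact h.symm ▸ rfl
    · right; apply Fin.ext; rw [val_add_one hn]; exact h.symm ▸ rfl
  · rintro (rfl | rfl)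
    · exact ⟨(hne u).symm, Or.inl (val_add_one hn u).symm⟩
    · exact ⟨hne v, Or.inr (val_add_one hn v).symm⟩

open Fin.CommRing in
lemma adj_filter_eq {n : ℕ} [NeZero n] (hn : 4 ≤ n) (i : Fin n) :
    Finset.univ.filter (fun j => (cycleGraph n).Adj i j) = {i + 1, i - 1} := by
  ext j
  simp only [Finset.mem_filter, Finset.mem_univ, true_and, Finset.mem_insert,
    Finset.mem_singleton, cycle_adj (show 3 ≤ n by omega)]
  constructor
  · rintro (rfl | h)
    · exact Or.inl rfl
    · right; rw [h]; ring
  · rintro (rfl | rfl)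
    · exact Or.inl rfl
    · right; ring

lemma two_ne_zero_fin {n : ℕ} [NeZero n] (hn : 4 ≤ n) : (1 + 1 : Fin n) ≠ 0 := by
  intro h
  have h2 : ((1 + 1 : Fin n)).val = 0 := by rw [h]; rfl
  rw [Fin.val_add] at h2
  have h1 : (1 : Fin n).val = 1 := by
    rw [Fin.val_one']; exact Nat.mod_eq_of_lt (by omega)
  rw [h1, Nat.mod_eq_of_lt (show 1 + 1 < n by omega)] at h2
  omega

open Fin.CommRing in
lemma mulVec_cycle {n : ℕ} [NeZero n] (hn : 4 ≤ n) (w : Fin n → ZMod 2) (i : Fin n) :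
    ((Matrix.of fun u v : Fin n => if (cycleGraph n).Adj u v then (1 : ZMod 2) else 0).mulVec w) i
      = w (i + 1) + w (i - 1) := by
  rw [Matrix.mulVec]
  show ∑ j, (if (cycleGraph n).Adj i j then (1 : ZMod 2) else 0) * w j = _
  rw [Finset.sum_congr rfl (fun j _ => (ite_mul _ _ _ _).trans (by rw [one_mul, zero_mul]))]
  rw [← Finset.sum_filter, adj_filter_eq hn i]
  rw [Finset.sum_pair]
  intro h
  have : (1 : Fin n) + 1 = 0 := by
    have := congrArg (fun x => x - i + 1) h
    simpa [sub_eq_iff_eq_add, add_sub_cancel_right] using by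
      have h2 : i + 1 - i = 1 := by ring
      have h3 : i - 1 - i = -1 := by ring
      calc (1 : Fin n) + 1 = (i + 1 - i) + 1 := by rw [h2]
        _ = (i - 1 - i) + 1 := by rw [h]
        _ = -1 + 1 := by rw [h3]
        _ = 0 := by ring
  exact two_ne_zero_fin hn this

open Fin.CommRing in
lemma ker_mem_iff {n : ℕ} [NeZero n] (hn : 4 ≤ n) (w : Fin n → ZMod 2) :
    w ∈ LinearMap.ker (Matrix.of fun u v : Fin n =>
        if (cycleGraph n).Adj u v then (1 : ZMod 2) else 0).mulVecLin
      ↔ ∀ i : Fin n, w (i + 2) = w i := by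
  rw [LinearMap.mem_ker]
  constructor
  · intro h i
    have h2 := congrFun h (i + 1)
    rw [Matrix.mulVecLin_apply, mulVec_cycle hn] at h2
    have : w (i + 1 + 1) + w (i + 1 - 1) = 0 := h2
    have h3 : i + 1 + 1 = i + 2 := by ring
    have h4 : i + 1 - 1 = i := by ring
    rw [h3, h4] at this
    have h5 : w (i + 2) = - w i := by linear_combination this
    rw [h5, CharTwo.neg_eq]
  · intro h
    funext i
    rw [Matrix.mulVecLin_apply, mulVec_cycle hn]
    have h2 : i + 1 = (i - 1) + 2 := by ring
    rw [h2, h (i - 1)]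
    exact CharTwo.add_self_eq_zero _

open Fin.CommRing in
lemma two_val {n : ℕ} [NeZero n] (hn : 4 ≤ n) : (2 : Fin n).val = 2 := by
  have h : (2 : Fin n) = 1 + 1 := by norm_num
  rw [h, Fin.val_add, Fin.val_one', Nat.mod_eq_of_lt (show 1 < n by omega),
    Nat.mod_eq_of_lt (show 1 + 1 < n by omega)]

lemma one_val {n : ℕ} [NeZero n] (hn : 4 ≤ n) : (1 : Fin n).val = 1 := by
  rw [Fin.val_one', Nat.mod_eq_of_lt (show 1 < n by omega)]

lemma periodic_eval {n : ℕ} [NeZero n] (hn : 4 ≤ n) (w : Fin n → ZMod 2)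
    (hw : ∀ i : Fin n, w (i + 2) = w i) :
    ∀ i : Fin n, w i = if Even i.val then w 0 else w 1 := by
  suffices h : ∀ m : ℕ, ∀ i : Fin n, i.val = m → w i = if Even i.val then w 0 else w 1 by
    exact fun i => h i.val i rfl
  intro m
  induction m using Nat.strong_induction_on with
  | _ m ih =>
    intro i him
    rcases Nat.lt_or_ge m 2 with hm | hm
    · interval_cases m
      · have : i = 0 := Fin.ext (by simp [him])
        subst this
        simp
      · have : i = 1 := Fin.ext (by rw [him, one_val hn])
        subst this
        rw [if_neg]
        rw [one_val hn]
        simp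
    · have hlt : m - 2 < n := by have := i.isLt; omega
      set j : Fin n := ⟨m - 2, hlt⟩ with hj
      have hji : j + 2 = i := by
        apply Fin.ext
        rw [Fin.val_add, two_val hn]
        have : j.val = m - 2 := rfl
        rw [this, him]
        have := i.isLt
        rw [Nat.mod_eq_of_lt (by omega)]
        omega
      have h1 : w i = w j := by rw [← hji, hw]
      have h2 := ih (m - 2) (by omega) j rfl
      rw [h1, h2]
      have hpar : (Even (m - 2)) ↔ Even m := by
        rw [Nat.even_iff, Nat.even_iff]; omega
      rw [him]
      show (if Even j.val then w 0 else w 1) = _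
      have : j.val = m - 2 := rfl
      rw [this]
      by_cases he : Even m
      · rw [if_pos (hpar.mpr he), if_pos he]
      · rw [if_neg (fun hh => he (hpar.mp hh)), if_neg he]

lemma ker_finrank {n : ℕ} [NeZero n] (hn : 4 ≤ n) (heven : Even n) :
    Module.finrank (ZMod 2) (LinearMap.ker (Matrix.of fun u v : Fin n =>
      if (cycleGraph n).Adj u v then (1 : ZMod 2) else 0).mulVecLin) = 2 := by
  set K := LinearMap.ker (Matrix.of fun u v : Fin n =>
      if (cycleGraph n).Adj u v then (1 : ZMod 2) else 0).mulVecLin with hK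
  let φ : K →ₗ[ZMod 2] (ZMod 2 × ZMod 2) :=
    { toFun := fun w => (w.1 0, w.1 1)
      map_add' := fun a b => rfl
      map_smul' := fun c a => rfl }
  have hbij : Function.Bijective φ := by
    constructor
    · intro a b hab
      have ha := periodic_eval hn a.1 ((ker_mem_iff hn a.1).mp a.2)
      have hb := periodic_eval hn b.1 ((ker_mem_iff hn b.1).mp b.2)
      have h0 : a.1 0 = b.1 0 := congrArg Prod.fst hab
      have h1 : a.1 1 = b.1 1 := congrArg Prod.snd hab
      apply Subtype.ext
      funext i
      rw [ha i, hb i, h0, h1]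
    · intro p
      set wf : Fin n → ZMod 2 := fun i => if Even i.val then p.1 else p.2 with hwf
      have hker : wf ∈ K := by
        rw [hK, ker_mem_iff hn]
        intro i
        have hv : (i + 2).val = (i.val + 2) % n := by
          rw [Fin.val_add, two_val hn]
        have hpar : Even ((i + 2).val) ↔ Even i.val := by
          rw [hv]
          have hi := i.isLt
          have hn2 : n % 2 = 0 := Nat.even_iff.mp heven
          rcases Nat.lt_or_ge (i.val + 2) n with h' | h'
          · rw [Nat.mod_eq_of_lt h', Nat.even_iff, Nat.even_iff]; omega
          · have : (i.val + 2) % n = i.val + 2 - n := by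
              rw [Nat.mod_eq_sub_mod h', Nat.mod_eq_of_lt (by omega)]
            rw [this, Nat.even_iff, Nat.even_iff]; omega
        show (if Even (i + 2).val then p.1 else p.2) = (if Even i.val then p.1 else p.2)
        by_cases he : Even i.val
        · rw [if_pos (hpar.mpr he), if_pos he]
        · rw [if_neg (fun hh => he (hpar.mp hh)), if_neg he]
      refine ⟨⟨wf, hker⟩, ?_⟩
      show (wf 0, wf 1) = p
      have h0 : wf 0 = p.1 := by
        show (if Even (0 : Fin n).val then p.1 else p.2) = p.1
        simp
      have h1 : wf 1 = p.2 := by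
        show (if Even (1 : Fin n).val then p.1 else p.2) = p.2
        rw [one_val hn]
        simp
      rw [h0, h1]
  have := LinearEquiv.finrank_eq (LinearEquiv.ofBijective φ hbij)
  rw [this]
  simp [Module.finrank_prod]

lemma cycle_rank {n : ℕ} [NeZero n] (hn : 4 ≤ n) (heven : Even n) :
    (Matrix.of fun u v : Fin n =>
      if (cycleGraph n).Adj u v then (1 : ZMod 2) else 0).rank = n - 2 := by
  have hrn := LinearMap.finrank_range_add_finrank_ker (Matrix.of fun u v : Fin n =>
      if (cycleGraph n).Adj u v then (1 : ZMod 2) else 0).mulVecLin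
  rw [ker_finrank hn heven] at hrn
  have hpi : Module.finrank (ZMod 2) (Fin n → ZMod 2) = n := by
    simp [Module.finrank_pi]
  rw [hpi] at hrn
  show Module.finrank (ZMod 2) _ = n - 2
  omega



def coverB (m n : ℕ) (h2 : 2 * m + 2 = n) : Fin m → Finset (Fin n) × Finset (Fin n) :=
  fun j => ({⟨0, by omega⟩, ⟨2 * j.val + 2, by have := j.isLt; omega⟩},
            {⟨2 * j.val + 1, by have := j.isLt; omega⟩, ⟨2 * j.val + 3, by have := j.isLt; omega⟩})

lemma filter_card_zero {m : ℕ} (P : Fin m → Prop) [DecidablePred P]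
    (h : ∀ j, ¬ P j) : (Finset.univ.filter P).card = 0 := by
  rw [Finset.card_eq_zero, Finset.filter_eq_empty_iff]
  exact fun j _ => h j

lemma filter_card_one {m : ℕ} (P : Fin m → Prop) [DecidablePred P] (c : ℕ) (hc : c < m)
    (h : ∀ j, P j ↔ j.val = c) : (Finset.univ.filter P).card = 1 := by
  have : Finset.univ.filter P = {(⟨c, hc⟩ : Fin m)} := by
    ext j
    simp [h j, Fin.ext_iff]
  rw [this, Finset.card_singleton]

lemma filter_card_two {m : ℕ} (P : Fin m → Prop) [DecidablePred P] (c d : ℕ)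
    (hc : c < m) (hd : d < m) (hcd : c ≠ d)
    (h : ∀ j, P j ↔ (j.val = c ∨ j.val = d)) : (Finset.univ.filter P).card = 2 := by
  have : Finset.univ.filter P = {(⟨c, hc⟩ : Fin m), (⟨d, hd⟩ : Fin m)} := by
    ext j
    simp [h j, Fin.ext_iff]
  rw [this, Finset.card_pair (by simp [Fin.ext_iff]; omega)]

lemma adj_iff_val {n : ℕ} (hn : 4 ≤ n) (u v : Fin n) :
    (cycleGraph n).Adj u v ↔ (u.val ≠ v.val ∧
      ((u.val + 1 = v.val ∨ (u.val + 1 = n ∧ v.val = 0)) ∨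
       (v.val + 1 = u.val ∨ (v.val + 1 = n ∧ u.val = 0)))) := by
  have key : ∀ a b : ℕ, a < n → b < n → ((a + 1) % n = b ↔ (a + 1 = b ∨ (a + 1 = n ∧ b = 0))) := by
    intro a b ha hb
    rcases Nat.lt_or_ge (a + 1) n with h | h
    · rw [Nat.mod_eq_of_lt h]; omega
    · have h1 : a + 1 = n := by omega
      rw [h1, Nat.mod_self]; omega
  change (u ≠ v ∧ ((u.val + 1) % n = v.val ∨ (v.val + 1) % n = u.val)) ↔ _
  rw [key u.val v.val u.isLt v.isLt, key v.val u.val v.isLt u.isLt, Ne, Fin.ext_iff]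

lemma card_filter_iff {m : ℕ} {p q : Fin m → Prop} {hp : DecidablePred p} {hq : DecidablePred q}
    (h : ∀ j, p j ↔ q j) :
    (@Finset.filter _ p hp Finset.univ).card = (@Finset.filter _ q hq Finset.univ).card := by
  congr 1
  ext j
  rw [Finset.mem_filter, Finset.mem_filter]
  simp [h j]

lemma coverB_count {m n : ℕ} (h2 : 2 * m + 2 = n) (hm : 1 ≤ m) (u v : Fin n)
    (hlt : u.val < v.val) :
    ((cycleGraph n).Adj u v ↔ Odd (Finset.univ.filter (fun i : Fin m =>
      (u ∈ (coverB m n h2 i).1 ∧ v ∈ (coverB m n h2 i).2) ∨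
      (u ∈ (coverB m n h2 i).2 ∧ v ∈ (coverB m n h2 i).1))).card) := by
  have hn : 4 ≤ n := by omega
  set a := u.val with ha
  set b := v.val with hb
  have hbn : b < n := v.isLt
  have hP : ∀ j : Fin m,
      ((u ∈ (coverB m n h2 j).1 ∧ v ∈ (coverB m n h2 j).2) ∨
       (u ∈ (coverB m n h2 j).2 ∧ v ∈ (coverB m n h2 j).1)) ↔
      (((a = 0 ∨ a = 2 * j.val + 2) ∧ (b = 2 * j.val + 1 ∨ b = 2 * j.val + 3)) ∨
       ((a = 2 * j.val + 1 ∨ a = 2 * j.val + 3) ∧ (b = 0 ∨ b = 2 * j.val + 2))) := by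
    intro j
    simp [coverB, Fin.ext_iff, ha, hb]
  rw [adj_iff_val hn u v]
  rw [Finset.filter_congr (fun j _ => by
    rw [hP j] : ∀ j ∈ Finset.univ, _ ↔ _)]
  rcases Nat.even_or_odd a with haE | haO <;> rcases Nat.even_or_odd b with hbE | hbO
  · -- both even
    rw [Nat.even_iff] at haE hbE
    apply iff_of_false
    · omega
    · rw [filter_card_zero _ (fun j => by have := j.isLt; omega)]
      simp
  · -- a even, b odd
    rw [Nat.even_iff] at haE
    rw [Nat.odd_iff] at hbO
    by_cases ha0 : a = 0
    · by_cases hb1 : b = 1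
      · apply iff_of_true
        · omega
        · rw [filter_card_one _ 0 (by omega) (fun j => by have := j.isLt; omega)]
          simp
      · by_cases hbtop : b = 2 * m + 1
        · apply iff_of_true
          · omega
          · rw [filter_card_one _ (m - 1) (by omega) (fun j => by have := j.isLt; omega)]
            simp
        · apply iff_of_false
          · omega
          · rw [filter_card_two _ ((b - 3) / 2) ((b - 1) / 2) (by omega) (by omega) (by omega)
              (fun j => by have := j.isLt; omega)]
            simp
    · by_cases hb1 : b = a + 1
      · apply iff_of_true
        · omega
        · rw [filter_card_one _ ((a - 2) / 2) (by omega) (fun j => by have := j.isLt; omega)]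
          simp
      · apply iff_of_false
        · omega
        · rw [filter_card_zero _ (fun j => by have := j.isLt; omega)]
          simp
  · -- a odd, b even
    rw [Nat.odd_iff] at haO
    rw [Nat.even_iff] at hbE
    by_cases hb1 : b = a + 1
    · apply iff_of_true
      · omega
      · rw [filter_card_one _ ((b - 2) / 2) (by omega) (fun j => by have := j.isLt; omega)]
        simp
    · apply iff_of_false
      · omega
      · rw [filter_card_zero _ (fun j => by have := j.isLt; omega)]
        simp
  · -- both odd
    rw [Nat.odd_iff] at haO hbO
    apply iff_of_false
    · omega
    · rw [filter_card_zero _ (fun j => by have := j.isLt; omega)]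
      simp

lemma coverB_isOddCover {m n : ℕ} (h2 : 2 * m + 2 = n) (hm : 1 ≤ m) :
    IsOddCover (cycleGraph n) (coverB m n h2) := by
  constructor
  · intro j
    rw [Finset.disjoint_left]
    intro x hx hx'
    have hj := j.isLt
    simp [coverB, Fin.ext_iff] at hx hx'
    omega
  · intro u v huv
    rcases lt_trichotomy u.val v.val with h | h | h
    · have h1 := coverB_count h2 hm u v h
      refine h1.trans (iff_of_eq (congrArg Odd ?_))
      exact card_filter_iff (fun j => Iff.rfl)
    · exact absurd (Fin.ext h) huv
    · have h1 := coverB_count h2 hm v u h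
      rw [(cycleGraph n).adj_comm]
      refine h1.trans (iff_of_eq (congrArg Odd ?_))
      exact card_filter_iff (fun j => by tauto)

lemma rank_sum_le' {V : Type*} [Fintype V] {k : ℕ} (M : Fin k → Matrix V V (ZMod 2))
    (s : Finset (Fin k)) : (∑ i ∈ s, M i).rank ≤ ∑ i ∈ s, (M i).rank := by
  classical
  induction s using Finset.induction_on with
  | empty => simp
  | insert _ _ hnotmem ih =>
    rw [Finset.sum_insert hnotmem, Finset.sum_insert hnotmem]
    exact le_trans (rank_add_le _ _) (Nat.add_le_add_left ih _)

theorem stmt10 (n : ℕ) (hn : 4 ≤ n) (heven : Even n) :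
    b2 (cycleGraph n) = (n - 2) / 2 := by
  haveI : NeZero n := ⟨by omega⟩
  have hn2 : n % 2 = 0 := Nat.even_iff.mp heven
  set m := (n - 2) / 2 with hm
  have h2 : 2 * m + 2 = n := by omega
  have hm1 : 1 ≤ m := by omega
  have hmem : m ∈ {k : ℕ | ∃ B : Fin k → Finset (Fin n) × Finset (Fin n),
      IsOddCover (cycleGraph n) B} :=
    ⟨coverB m n h2, coverB_isOddCover h2 hm1⟩
  have hlow : ∀ k ∈ {k : ℕ | ∃ B : Fin k → Finset (Fin n) × Finset (Fin n),
      IsOddCover (cycleGraph n) B}, m ≤ k := by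
    rintro k ⟨B, hdis, hc⟩
    have hA := decomp (cycleGraph n) B hdis hc
    have hr : (Matrix.of fun u v : Fin n =>
        if (cycleGraph n).Adj u v then (1 : ZMod 2) else 0).rank ≤ 2 * k := by
      rw [hA]
      refine le_trans (rank_sum_le' _ _) ?_
      calc ∑ i : Fin k, (bmat (B i).1 (B i).2).rank
          ≤ ∑ _i : Fin k, 2 := Finset.sum_le_sum (fun i _ => bmat_rank _ _)
        _ = 2 * k := by simp [Finset.sum_const, mul_comm]
    rw [cycle_rank hn heven] at hr
    omega
  exact le_antisymm (Nat.sInf_le hmem) (le_csInf ⟨m, hmem⟩ hlow)
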